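/- For all i, j ∈ {1,2,3}, all m ∈ ℤ and all n ∈ ℤ with n ≠ 0, one has [β_{j,m}, x*_{i,n}] = −½ Σ_k ε_{ijk} x^k_{m+n} as endomorphisms of V. -/
import Mathlib


open Finset

/-- Levi-Civita symbol on `{1,2,3}` (indexed by `Fin 3`). -/
def eps (i j k : Fin 3) : ℤ :=
  (((j : ℤ) - (i : ℤ)) * ((k : ℤ) - (i : ℤ)) * ((k : ℤ) - (j : ℤ))) / 2

lemma eps_swap23 (i a b : Fin 3) : eps i a b = - eps i b a := by revert i a b; decide

lemma eps_swap12 (i a b : Fin 3) : eps i a b = - eps a i b := by revert i a b; decide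

variable {V : Type*} [AddCommGroup V] [Module ℂ V]

/-- `x^i_n`: equals the given `x^i_0` for `n = 0`, and `−(1/n) α^i_n` for `n ≠ 0`. -/
noncomputable def xop (α : Fin 3 → ℤ → Module.End ℂ V) (x0 : Fin 3 → Module.End ℂ V)
    (i : Fin 3) (n : ℤ) : Module.End ℂ V :=
  if n = 0 then x0 i else (-(n : ℂ)⁻¹) • α i n

/-- `P_i = β_{i,0} + Σ_{j,k} ε_{ijk} x^j_0 W^k − ½ Σ_{j,k} ε_{ijk} Σ_{m∈ℤ} m x^j_{−m} x^k_m`,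
defined pointwise on vectors (the inner sum has finitely many nonzero terms on each vector). -/
noncomputable def Pop (α β : Fin 3 → ℤ → Module.End ℂ V) (x0 : Fin 3 → Module.End ℂ V)
    (i : Fin 3) : V → V := fun v =>
  β i 0 v + (∑ j : Fin 3, ∑ k : Fin 3, eps i j k • (x0 j) ((α k 0) v))
    - (2 : ℂ)⁻¹ • ∑ j : Fin 3, ∑ k : Fin 3, eps i j k •
        ∑ᶠ m : ℤ, (m : ℂ) • (xop α x0 j (-m)) ((xop α x0 k m) v)

/-- `x*_{i,n} = −(1/n)(β_{i,n} + Σ_{j,k} ε_{ijk} x^j_n W^k − ½ Σ_{j,k} ε_{ijk} Σ_m m x^j_{n−m} x^k_m)`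
for `n ≠ 0`, defined pointwise on vectors. -/
noncomputable def xstarop (α β : Fin 3 → ℤ → Module.End ℂ V) (x0 : Fin 3 → Module.End ℂ V)
    (i : Fin 3) (n : ℤ) : V → V := fun v =>
  (-(n : ℂ)⁻¹) • (β i n v + (∑ j : Fin 3, ∑ k : Fin 3, eps i j k • (xop α x0 j n) ((α k 0) v))
    - (2 : ℂ)⁻¹ • ∑ j : Fin 3, ∑ k : Fin 3, eps i j k •
        ∑ᶠ m : ℤ, (m : ℂ) • (xop α x0 j (n - m)) ((xop α x0 k m) v))

section
variable (α β : Fin 3 → ℤ → Module.End ℂ V) (x0 : Fin 3 → Module.End ℂ V)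

lemma comm_of_lie {f g : Module.End ℂ V} (h : ⁅f, g⁆ = 0) : f * g = g * f := by
  rw [Ring.lie_def] at h; linear_combination (norm := noncomm_ring) h

lemma xop_mul_comm
    (R1 : ∀ (i j : Fin 3) (m n : ℤ), ⁅α i m, α j n⁆ = 0)
    (R5a : ∀ (i j : Fin 3) (n : ℤ), ⁅α j n, x0 i⁆ = 0)
    (R5b : ∀ i j : Fin 3, ⁅x0 i, x0 j⁆ = 0)
    (a b : Fin 3) (p q : ℤ) :
    xop α x0 a p * xop α x0 b q = xop α x0 b q * xop α x0 a p := by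
  unfold xop
  split_ifs with h1 h2 h2
  · exact comm_of_lie (R5b a b)
  · rw [mul_smul_comm, smul_mul_assoc, comm_of_lie (R5a a b q)]
  · rw [mul_smul_comm, smul_mul_assoc, ← comm_of_lie (R5a b a p)]
  · rw [smul_mul_assoc, mul_smul_comm, smul_mul_assoc, mul_smul_comm, smul_smul, smul_smul,
      comm_of_lie (R1 a b p q), mul_comm]

lemma xop_comm
    (R1 : ∀ (i j : Fin 3) (m n : ℤ), ⁅α i m, α j n⁆ = 0)
    (R5a : ∀ (i j : Fin 3) (n : ℤ), ⁅α j n, x0 i⁆ = 0)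
    (R5b : ∀ i j : Fin 3, ⁅x0 i, x0 j⁆ = 0)
    (a b : Fin 3) (p q : ℤ) (w : V) :
    xop α x0 a p (xop α x0 b q w) = xop α x0 b q (xop α x0 a p w) := by
  have := congrArg (fun f : Module.End ℂ V => f w) (xop_mul_comm α x0 R1 R5a R5b a b p q)
  simpa [Module.End.mul_apply] using this

lemma beta_xop
    (R2 : ∀ (i j : Fin 3) (m n : ℤ), ⁅β i m, α j n⁆
      = if i = j ∧ m + n = 0 then (m : ℂ) • (1 : Module.End ℂ V) else 0)
    (R6 : ∀ (i j : Fin 3) (n : ℤ), ⁅β j n, x0 i⁆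
      = if i = j ∧ n = 0 then (1 : Module.End ℂ V) else 0)
    (j k : Fin 3) (m p : ℤ) (w : V) :
    β j m (xop α x0 k p w) - xop α x0 k p (β j m w)
      = if j = k ∧ m + p = 0 then w else 0 := by
  have H : β j m * xop α x0 k p - xop α x0 k p * β j m
      = if j = k ∧ m + p = 0 then (1 : Module.End ℂ V) else 0 := by
    unfold xop
    by_cases h1 : p = 0
    · rw [if_pos h1]
      have h6 := R6 k j m
      rw [Ring.lie_def] at h6
      rw [h6]
      exact if_congr (by constructor <;> (rintro ⟨h, h'⟩; exact ⟨h.symm, by omega⟩)) rfl rfl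
    · rw [if_neg h1, mul_smul_comm, smul_mul_assoc, ← smul_sub]
      have h2 := R2 j k m p
      rw [Ring.lie_def] at h2
      rw [h2]
      by_cases hc : j = k ∧ m + p = 0
      · rw [if_pos hc, if_pos hc, smul_smul]
        have hm : (m : ℂ) = -(p : ℂ) := by
          have : m = -p := by omega
          simp [this]
        rw [hm, mul_neg, neg_mul, neg_neg, inv_mul_cancel₀ (by exact_mod_cast h1), one_smul]
      · rw [if_neg hc, if_neg hc, smul_zero]
  have := congrArg (fun f : Module.End ℂ V => f w) H
  simpa [Module.End.mul_apply, apply_ite (fun f : Module.End ℂ V => f w)] using this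

lemma beta_alpha0
    (R2 : ∀ (i j : Fin 3) (m n : ℤ), ⁅β i m, α j n⁆
      = if i = j ∧ m + n = 0 then (m : ℂ) • (1 : Module.End ℂ V) else 0)
    (j k : Fin 3) (m : ℤ) (w : V) :
    β j m (α k 0 w) = α k 0 (β j m w) := by
  have h2 := R2 j k m 0
  rw [Ring.lie_def] at h2
  have : β j m * α k 0 - α k 0 * β j m = 0 := by
    rw [h2]
    split_ifs with hc
    · have : m = 0 := by omega
      simp [this]
    · rfl
  have := congrArg (fun f : Module.End ℂ V => f w) this
  simp only [LinearMap.sub_apply, Module.End.mul_apply, LinearMap.zero_apply] at this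
  exact sub_eq_zero.mp this

lemma alpha_eq_xop (a : Fin 3) (p : ℤ) (hp : p ≠ 0) (w : V) :
    α a p w = (-(p : ℂ)) • xop α x0 a p w := by
  unfold xop
  rw [if_neg hp, LinearMap.smul_apply, smul_smul]
  rw [neg_mul_neg, mul_inv_cancel₀ (by exact_mod_cast hp), one_smul]

lemma xop_support
    (R1 : ∀ (i j : Fin 3) (m n : ℤ), ⁅α i m, α j n⁆ = 0)
    (R4 : ∀ v : V, ∃ N : ℤ, ∀ (i : Fin 3) (n : ℤ), N ≤ n → α i n v = 0 ∧ β i n v = 0)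
    (R5a : ∀ (i j : Fin 3) (n : ℤ), ⁅α j n, x0 i⁆ = 0)
    (R5b : ∀ i j : Fin 3, ⁅x0 i, x0 j⁆ = 0)
    (a b : Fin 3) (p : ℤ) (v : V) :
    (Function.support fun m' : ℤ =>
      (m' : ℂ) • xop α x0 a (p - m') (xop α x0 b m' v)).Finite := by
  obtain ⟨N, hN⟩ := R4 v
  apply Set.Finite.subset (Set.finite_Ioo (p - max N 1) (max N 1))
  intro m' hm'
  simp only [Function.mem_support] at hm'
  by_contra hcon
  apply hm'
  simp only [Set.mem_Ioo, not_and_or, not_lt] at hcon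
  have hzero : ∀ (c : Fin 3) (r : ℤ), max N 1 ≤ r → xop α x0 c r v = 0 := by
    intro c r hr
    have hr0 : r ≠ 0 := by have := le_max_right N 1; omega
    have := (hN c r (le_trans (le_max_left N 1) hr)).1
    unfold xop
    rw [if_neg hr0, LinearMap.smul_apply, this, smul_zero]
  rcases hcon with h | h
  · rw [xop_comm α x0 R1 R5a R5b, hzero a (p - m') (by omega), map_zero, smul_zero]
  · rw [hzero b m' h, map_zero, smul_zero]

lemma key_finsum
    (R1 : ∀ (i j : Fin 3) (m n : ℤ), ⁅α i m, α j n⁆ = 0)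
    (R2 : ∀ (i j : Fin 3) (m n : ℤ), ⁅β i m, α j n⁆
      = if i = j ∧ m + n = 0 then (m : ℂ) • (1 : Module.End ℂ V) else 0)
    (R4 : ∀ v : V, ∃ N : ℤ, ∀ (i : Fin 3) (n : ℤ), N ≤ n → α i n v = 0 ∧ β i n v = 0)
    (R5a : ∀ (i j : Fin 3) (n : ℤ), ⁅α j n, x0 i⁆ = 0)
    (R5b : ∀ i j : Fin 3, ⁅x0 i, x0 j⁆ = 0)
    (R6 : ∀ (i j : Fin 3) (n : ℤ), ⁅β j n, x0 i⁆
      = if i = j ∧ n = 0 then (1 : Module.End ℂ V) else 0)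
    (j j' k' : Fin 3) (m n : ℤ) (v : V) :
    β j m (∑ᶠ m' : ℤ, (m' : ℂ) • xop α x0 j' (n - m') (xop α x0 k' m' v))
      - ∑ᶠ m' : ℤ, (m' : ℂ) • xop α x0 j' (n - m') (xop α x0 k' m' (β j m v))
    = (if j = j' then ((m + n : ℤ) : ℂ) • xop α x0 k' (m + n) v else 0)
      + (if j = k' then ((-m : ℤ) : ℂ) • xop α x0 j' (m + n) v else 0) := by
  have hF := xop_support α β x0 R1 R4 R5a R5b j' k' n v
  have hF' := xop_support α β x0 R1 R4 R5a R5b j' k' n (β j m v)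
  have hβF : (Function.support fun m' : ℤ =>
      β j m ((m' : ℂ) • xop α x0 j' (n - m') (xop α x0 k' m' v))).Finite := by
    apply hF.subset
    intro x hx
    simp only [Function.mem_support] at hx ⊢
    intro h0
    exact hx (by rw [h0, map_zero])
  have h1 := AddMonoidHom.map_finsum (β j m).toAddMonoidHom hF
  simp only [LinearMap.toAddMonoidHom_coe] at h1
  rw [h1, ← finsum_sub_distrib hβF hF']
  have hterm : ∀ m' : ℤ,
      β j m ((m' : ℂ) • xop α x0 j' (n - m') (xop α x0 k' m' v))
        - (m' : ℂ) • xop α x0 j' (n - m') (xop α x0 k' m' (β j m v))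
      = (if j = j' ∧ m' = m + n then ((m + n : ℤ) : ℂ) • xop α x0 k' (m + n) v else 0)
        + (if j = k' ∧ m' = -m then ((-m : ℤ) : ℂ) • xop α x0 j' (m + n) v else 0) := by
    intro m'
    rw [map_smul, ← smul_sub]
    have hdec : β j m (xop α x0 j' (n - m') (xop α x0 k' m' v))
        - xop α x0 j' (n - m') (xop α x0 k' m' (β j m v))
      = (β j m (xop α x0 j' (n - m') (xop α x0 k' m' v))
          - xop α x0 j' (n - m') (β j m (xop α x0 k' m' v)))
        + xop α x0 j' (n - m') (β j m (xop α x0 k' m' v) - xop α x0 k' m' (β j m v)) := by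
      rw [map_sub]; abel
    rw [hdec, beta_xop α β x0 R2 R6, beta_xop α β x0 R2 R6]
    rw [smul_add]
    congr 1
    · by_cases hc : j = j' ∧ m + (n - m') = 0
      · have hm' : m' = m + n := by omega
        rw [if_pos hc, if_pos ⟨hc.1, hm'⟩, hm']
      · rw [if_neg hc, if_neg (by intro h; exact hc ⟨h.1, by omega⟩), smul_zero]
    · by_cases hc : j = k' ∧ m + m' = 0
      · have hm' : m' = -m := by omega
        have hnm : n - m' = m + n := by omega
        rw [if_pos hc, if_pos ⟨hc.1, hm'⟩, hnm, hm']
      · rw [if_neg hc, if_neg (by intro h; exact hc ⟨h.1, by omega⟩), map_zero, smul_zero]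
  rw [finsum_congr hterm]
  have hsup1 : (Function.support fun m' : ℤ =>
      (if j = j' ∧ m' = m + n then ((m + n : ℤ) : ℂ) • xop α x0 k' (m + n) v else 0)).Finite := by
    apply (Set.finite_singleton (m + n)).subset
    intro x hx
    simp only [Function.mem_support] at hx
    by_contra h
    exact hx (if_neg (by intro hc; exact h hc.2))
  have hsup2 : (Function.support fun m' : ℤ =>
      (if j = k' ∧ m' = -m then ((-m : ℤ) : ℂ) • xop α x0 j' (m + n) v else 0)).Finite := by
    apply (Set.finite_singleton (-m)).subset
    intro x hx
    simp only [Function.mem_support] at hx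
    by_contra h
    exact hx (if_neg (by intro hc; exact h hc.2))
  rw [finsum_add_distrib hsup1 hsup2,
    finsum_eq_single _ (m + n) (fun x hx => if_neg (by intro hc; exact hx hc.2)),
    finsum_eq_single _ (-m) (fun x hx => if_neg (by intro hc; exact hx hc.2))]
  simp

lemma D3_lemma
    (R1 : ∀ (i j : Fin 3) (m n : ℤ), ⁅α i m, α j n⁆ = 0)
    (R2 : ∀ (i j : Fin 3) (m n : ℤ), ⁅β i m, α j n⁆
      = if i = j ∧ m + n = 0 then (m : ℂ) • (1 : Module.End ℂ V) else 0)
    (R4 : ∀ v : V, ∃ N : ℤ, ∀ (i : Fin 3) (n : ℤ), N ≤ n → α i n v = 0 ∧ β i n v = 0)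
    (R5a : ∀ (i j : Fin 3) (n : ℤ), ⁅α j n, x0 i⁆ = 0)
    (R5b : ∀ i j : Fin 3, ⁅x0 i, x0 j⁆ = 0)
    (R6 : ∀ (i j : Fin 3) (n : ℤ), ⁅β j n, x0 i⁆
      = if i = j ∧ n = 0 then (1 : Module.End ℂ V) else 0)
    (i j : Fin 3) (m n : ℤ) (v : V) :
    β j m (∑ j' : Fin 3, ∑ k' : Fin 3, eps i j' k' •
        ∑ᶠ m' : ℤ, (m' : ℂ) • xop α x0 j' (n - m') (xop α x0 k' m' v))
      - ∑ j' : Fin 3, ∑ k' : Fin 3, eps i j' k' •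
        ∑ᶠ m' : ℤ, (m' : ℂ) • xop α x0 j' (n - m') (xop α x0 k' m' (β j m v))
    = ((m + n : ℤ) : ℂ) • (∑ k : Fin 3, eps i j k • xop α x0 k (m + n) v)
      + (m : ℂ) • (∑ k : Fin 3, eps i j k • xop α x0 k (m + n) v) := by
  calc β j m (∑ j' : Fin 3, ∑ k' : Fin 3, eps i j' k' •
        ∑ᶠ m' : ℤ, (m' : ℂ) • xop α x0 j' (n - m') (xop α x0 k' m' v))
      - ∑ j' : Fin 3, ∑ k' : Fin 3, eps i j' k' •
        ∑ᶠ m' : ℤ, (m' : ℂ) • xop α x0 j' (n - m') (xop α x0 k' m' (β j m v))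
      = ∑ j' : Fin 3, ∑ k' : Fin 3, eps i j' k' •
          (β j m (∑ᶠ m' : ℤ, (m' : ℂ) • xop α x0 j' (n - m') (xop α x0 k' m' v))
            - ∑ᶠ m' : ℤ, (m' : ℂ) • xop α x0 j' (n - m') (xop α x0 k' m' (β j m v))) := by
        simp only [map_sum, map_zsmul, smul_sub, Finset.sum_sub_distrib]
    _ = ∑ j' : Fin 3, ∑ k' : Fin 3, eps i j' k' •
          ((if j = j' then ((m + n : ℤ) : ℂ) • xop α x0 k' (m + n) v else 0)
            + (if j = k' then ((-m : ℤ) : ℂ) • xop α x0 j' (m + n) v else 0)) :=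
        Finset.sum_congr rfl fun j' _ => Finset.sum_congr rfl fun k' _ => by
          rw [key_finsum α β x0 R1 R2 R4 R5a R5b R6]
    _ = (∑ j' : Fin 3, ∑ k' : Fin 3, eps i j' k' •
          (if j = j' then ((m + n : ℤ) : ℂ) • xop α x0 k' (m + n) v else 0))
        + ∑ j' : Fin 3, ∑ k' : Fin 3, eps i j' k' •
          (if j = k' then ((-m : ℤ) : ℂ) • xop α x0 j' (m + n) v else 0) := by
        simp only [smul_add, Finset.sum_add_distrib]
    _ = ((m + n : ℤ) : ℂ) • (∑ k : Fin 3, eps i j k • xop α x0 k (m + n) v)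
      + (m : ℂ) • (∑ k : Fin 3, eps i j k • xop α x0 k (m + n) v) := by
        congr 1
        · rw [show (∑ j' : Fin 3, ∑ k' : Fin 3, eps i j' k' •
              (if j = j' then ((m + n : ℤ) : ℂ) • xop α x0 k' (m + n) v else 0))
            = ∑ j' : Fin 3, (if j = j' then
                ∑ k' : Fin 3, eps i j' k' • (((m + n : ℤ) : ℂ) • xop α x0 k' (m + n) v) else 0)
            from Finset.sum_congr rfl fun j' _ => by split_ifs with h <;> simp]
          rw [Finset.sum_ite_eq]
          simp only [Finset.mem_univ, if_pos]
          rw [Finset.smul_sum]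
          exact Finset.sum_congr rfl fun k _ => (smul_comm _ _ _)
        · rw [show (∑ j' : Fin 3, ∑ k' : Fin 3, eps i j' k' •
              (if j = k' then ((-m : ℤ) : ℂ) • xop α x0 j' (m + n) v else 0))
            = ∑ j' : Fin 3, ∑ k' : Fin 3, (if j = k' then
                eps i j' k' • (((-m : ℤ) : ℂ) • xop α x0 j' (m + n) v) else 0)
            from Finset.sum_congr rfl fun j' _ => Finset.sum_congr rfl fun k' _ => by
              split_ifs with h <;> simp]
          simp only [Finset.sum_ite_eq, Finset.mem_univ, if_pos]
          rw [Finset.smul_sum]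
          refine Finset.sum_congr rfl fun k _ => ?_
          rw [eps_swap23 i k j, neg_smul, Int.cast_neg, neg_smul, smul_neg, neg_neg,
            smul_comm]

lemma D1_lemma
    (R3 : ∀ (i j : Fin 3) (m n : ℤ), ⁅β i m, β j n⁆ = ∑ k : Fin 3, eps i j k • α k (m + n))
    (i j : Fin 3) (m n : ℤ) (v : V) :
    β j m (β i n v) - β i n (β j m v)
      = -∑ k : Fin 3, eps i j k • α k (m + n) v := by
  have h3 := R3 j i m n
  rw [Ring.lie_def] at h3
  have h := congrArg (fun f : Module.End ℂ V => f v) h3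
  simp only [LinearMap.sub_apply, Module.End.mul_apply, LinearMap.sum_apply,
    LinearMap.smul_apply] at h
  rw [h]
  rw [← Finset.sum_neg_distrib]
  exact Finset.sum_congr rfl fun k _ => by rw [eps_swap12 j i k, neg_smul]

lemma D2_lemma
    (R2 : ∀ (i j : Fin 3) (m n : ℤ), ⁅β i m, α j n⁆
      = if i = j ∧ m + n = 0 then (m : ℂ) • (1 : Module.End ℂ V) else 0)
    (R6 : ∀ (i j : Fin 3) (n : ℤ), ⁅β j n, x0 i⁆
      = if i = j ∧ n = 0 then (1 : Module.End ℂ V) else 0)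
    (i j : Fin 3) (m n : ℤ) (v : V) :
    β j m (∑ j' : Fin 3, ∑ k' : Fin 3, eps i j' k' • xop α x0 j' n (α k' 0 v))
      - ∑ j' : Fin 3, ∑ k' : Fin 3, eps i j' k' • xop α x0 j' n (α k' 0 (β j m v))
    = if m + n = 0 then ∑ k : Fin 3, eps i j k • α k 0 v else 0 := by
  have hterm : ∀ j' k' : Fin 3,
      β j m (xop α x0 j' n (α k' 0 v)) - xop α x0 j' n (α k' 0 (β j m v))
      = if j = j' ∧ m + n = 0 then α k' 0 v else 0 := by
    intro j' k'
    rw [← beta_alpha0 α β R2 j k' m v]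
    exact beta_xop α β x0 R2 R6 j j' m n (α k' 0 v)
  calc β j m (∑ j' : Fin 3, ∑ k' : Fin 3, eps i j' k' • xop α x0 j' n (α k' 0 v))
      - ∑ j' : Fin 3, ∑ k' : Fin 3, eps i j' k' • xop α x0 j' n (α k' 0 (β j m v))
      = ∑ j' : Fin 3, ∑ k' : Fin 3, eps i j' k' •
          (β j m (xop α x0 j' n (α k' 0 v)) - xop α x0 j' n (α k' 0 (β j m v))) := by
        simp only [map_sum, map_zsmul, smul_sub, Finset.sum_sub_distrib]
    _ = ∑ j' : Fin 3, ∑ k' : Fin 3, eps i j' k' •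
          (if j = j' ∧ m + n = 0 then α k' 0 v else 0) :=
        Finset.sum_congr rfl fun j' _ => Finset.sum_congr rfl fun k' _ => by rw [hterm]
    _ = if m + n = 0 then ∑ k : Fin 3, eps i j k • α k 0 v else 0 := by
        by_cases hmn : m + n = 0
        · rw [if_pos hmn]
          rw [show (∑ j' : Fin 3, ∑ k' : Fin 3, eps i j' k' •
              (if j = j' ∧ m + n = 0 then α k' 0 v else 0))
            = ∑ j' : Fin 3, (if j = j' then ∑ k' : Fin 3, eps i j' k' • α k' 0 v else 0)
            from Finset.sum_congr rfl fun j' _ => by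
              by_cases h : j = j' <;> simp [h, hmn]]
          rw [Finset.sum_ite_eq]
          simp
        · rw [if_neg hmn]
          refine Finset.sum_eq_zero fun j' _ => Finset.sum_eq_zero fun k' _ => ?_
          rw [if_neg (by tauto), smul_zero]

end

/-- `[β_{j,m}, x*_{i,n}] = −½ Σ_k ε_{ijk} x^k_{m+n}` (as endomorphisms, checked pointwise). -/
theorem beta_xstar_commutator
    (α β : Fin 3 → ℤ → Module.End ℂ V) (x0 : Fin 3 → Module.End ℂ V)
    (R1 : ∀ (i j : Fin 3) (m n : ℤ), ⁅α i m, α j n⁆ = 0)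
    (R2 : ∀ (i j : Fin 3) (m n : ℤ), ⁅β i m, α j n⁆
      = if i = j ∧ m + n = 0 then (m : ℂ) • (1 : Module.End ℂ V) else 0)
    (R3 : ∀ (i j : Fin 3) (m n : ℤ), ⁅β i m, β j n⁆ = ∑ k : Fin 3, eps i j k • α k (m + n))
    (R4 : ∀ v : V, ∃ N : ℤ, ∀ (i : Fin 3) (n : ℤ), N ≤ n → α i n v = 0 ∧ β i n v = 0)
    (R5a : ∀ (i j : Fin 3) (n : ℤ), ⁅α j n, x0 i⁆ = 0)
    (R5b : ∀ i j : Fin 3, ⁅x0 i, x0 j⁆ = 0)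
    (R6 : ∀ (i j : Fin 3) (n : ℤ), ⁅β j n, x0 i⁆
      = if i = j ∧ n = 0 then (1 : Module.End ℂ V) else 0)
    (i j : Fin 3) (m n : ℤ) (hn : n ≠ 0) (v : V) :
    (β j m) (xstarop α β x0 i n v) - xstarop α β x0 i n ((β j m) v)
      = -(2 : ℂ)⁻¹ • ∑ k : Fin 3, eps i j k • (xop α x0 k (m + n)) v := by
  have hnC : (n : ℂ) ≠ 0 := Int.cast_ne_zero.mpr hn
  simp only [xstarop]
  rw [map_smul, map_sub, map_add, map_smul]
  have e1 := D1_lemma α β R3 i j m n v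
  have e2 := D2_lemma α β x0 R2 R6 i j m n v
  have e3 := D3_lemma α β x0 R1 R2 R4 R5a R5b R6 i j m n v
  rw [sub_eq_iff_eq_add] at e1 e2 e3
  by_cases hmn : m + n = 0
  · simp only [hmn] at e1
    rw [if_pos hmn] at e2
    rw [e1, e2, e3]
    have hm : (m : ℂ) = -(n : ℂ) := by
      have : m = -n := by omega
      rw [this]; push_cast; ring
    match_scalars
    all_goals try ring
    all_goals (rw [hm]; field_simp; try ring)
  · have hA : (∑ k : Fin 3, eps i j k • α k (m + n) v)
        = (-(((m + n : ℤ)) : ℂ)) • ∑ k : Fin 3, eps i j k • xop α x0 k (m + n) v := by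
      rw [Finset.smul_sum]
      refine Finset.sum_congr rfl fun k _ => ?_
      rw [alpha_eq_xop α x0 k (m + n) hmn v, smul_comm]
    rw [hA] at e1
    rw [if_neg hmn] at e2
    rw [e1, e2, e3]
    match_scalars
    all_goals try ring
    all_goals (field_simp; try ring)
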